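/- Suppose h_p = h_q = h and the cost matrix C is effective, i.e., C_{i,j} = 0 implies i = j. If p, q are nonnegative histograms each summing to 1 and OMR(p,q) = 0, then p = q. -/
import Mathlib


/-- If the cost matrix is effective (`C i j = 0 → i = j`), then `OMR(p,q) = 0`
implies `p = q`. -/
theorem stmt_11 (h : ℕ) (p q : Fin (h + 1) → ℝ)
    (hpnn : ∀ i, 0 ≤ p i) (hqnn : ∀ j, 0 ≤ q j)
    (hpsum : ∑ i, p i = 1) (hqsum : ∑ j, q j = 1)
    (C : Fin (h + 1) → Fin (h + 1) → ℝ) (hC : ∀ i j, 0 ≤ C i j)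
    (heff : ∀ i j, C i j = 0 → i = j)
    (hO : IsLeast
      {c : ℝ | ∃ F : Fin (h + 1) → Fin (h + 1) → ℝ,
        (∀ i j, 0 ≤ F i j) ∧ (∀ i, ∑ j, F i j = p i) ∧
        (∀ i j, C i j = 0 → F i j ≤ q j) ∧
        c = ∑ i, ∑ j, F i j * C i j} 0) :
    p = q := by
  obtain ⟨F, hFnn, hFrow, hFcap, hFcost⟩ := hO.1
  -- every term F i j * C i j is zero
  have hterm : ∀ i j, F i j * C i j = 0 := by
    have h1 : ∀ i ∈ Finset.univ, ∑ j, F i j * C i j = 0 := by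
      rw [← Finset.sum_eq_zero_iff_of_nonneg]
      · exact hFcost.symm
      · intro i _
        exact Finset.sum_nonneg fun j _ => mul_nonneg (hFnn i j) (hC i j)
    intro i j
    have h2 := (Finset.sum_eq_zero_iff_of_nonneg
      (fun j _ => mul_nonneg (hFnn i j) (hC i j))).mp (h1 i (Finset.mem_univ i))
    exact h2 j (Finset.mem_univ j)
  -- off-diagonal F vanishes
  have hoff : ∀ i j, i ≠ j → F i j = 0 := by
    intro i j hij
    rcases mul_eq_zero.mp (hterm i j) with hF | hCz
    · exact hF
    · exact absurd (heff i j hCz) hij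
  -- p i = F i i
  have hdiag : ∀ i, p i = F i i := by
    intro i
    rw [← hFrow i, Finset.sum_eq_single i (fun j _ hj => hoff i j (Ne.symm hj))
      (fun hi => absurd (Finset.mem_univ i) hi)]
  -- p i ≤ q i
  have hle : ∀ i, p i ≤ q i := by
    intro i
    by_cases hCz : C i i = 0
    · rw [hdiag i]; exact hFcap i i hCz
    · rcases mul_eq_zero.mp (hterm i i) with hF | hCz'
      · rw [hdiag i, hF]; exact hqnn i
      · exact absurd hCz' hCz
  -- equal sums force equality
  funext i
  by_contra hne
  have hlt : p i < q i := lt_of_le_of_ne (hle i) hne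
  have : (1 : ℝ) < 1 := by
    calc (1 : ℝ) = ∑ i, p i := hpsum.symm
    _ < ∑ i, q i := Finset.sum_lt_sum (fun j _ => hle j) ⟨i, Finset.mem_univ i, hlt⟩
    _ = 1 := hqsum
  exact lt_irrefl 1 this
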